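/- Let G be a finite simple graph with m edges in which every vertex has positive degree, and let i and j be adjacent marked vertices with equal degree d = deg(i) = deg(j), with marked set M = {i,j}. Let ψ(0) be the uniform state, ψ(0)(e) = 1/√(2m) for every dart e, and ψ(t) = (S∘C∘Q)^t ψ(0). Then for every t ≥ 0, the probability of finding a marked vertex p_M(t) = Σ_{e : e.fst ∈ M} |ψ(t)(e)|² satisfies p_M(t) ≤ (1/m)·(2√((d−1)d³) + d(2d−1)); in particular p_M = O(d²/m). -/

import Mathlib

namespace GraphWalk

variable {V : Type*}

/-- The flip-flop shift operator `S` on the darts of a simple graph: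
`(Sψ)(e) = ψ(e.symm)`. -/
noncomputable def shift (G : SimpleGraph V) (ψ : G.Dart → ℂ) : G.Dart → ℂ :=
  fun e => ψ e.symm

/-- The Grover coin `C`:
`(Cψ)(e) = (2/deg(e.fst)) Σ_{e' : e'.fst = e.fst} ψ(e') − ψ(e)`. -/
noncomputable def coin [Fintype V] [DecidableEq V] (G : SimpleGraph V)
    [DecidableRel G.Adj] (ψ : G.Dart → ℂ) : G.Dart → ℂ :=
  fun e => (2 / (G.degree e.fst : ℂ)) *
      (∑ e' ∈ Finset.univ.filter (fun e' : G.Dart => e'.fst = e.fst), ψ e') - ψ e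

/-- The query `Q`, flipping the sign of all amplitudes at marked vertices. -/
noncomputable def query [DecidableEq V] (G : SimpleGraph V) (M : Finset V)
    (ψ : G.Dart → ℂ) : G.Dart → ℂ :=
  fun e => if e.fst ∈ M then -ψ e else ψ e

/-- One step of the search algorithm, `U' = S ∘ C ∘ Q`. -/
noncomputable def step [Fintype V] [DecidableEq V] (G : SimpleGraph V)
    [DecidableRel G.Adj] (M : Finset V) (ψ : G.Dart → ℂ) : G.Dart → ℂ :=
  shift G (coin G (query G M ψ))

/-- One step of the quantum walk without query, `U = S ∘ C`. -/
noncomputable def walk [Fintype V] [DecidableEq V] (G : SimpleGraph V)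
    [DecidableRel G.Adj] (ψ : G.Dart → ℂ) : G.Dart → ℂ :=
  shift G (coin G ψ)

end GraphWalk


namespace GraphWalkAux
open Finset SimpleGraph

lemma grover_fiber {D : Type*} (s : Finset D) (a : D → ℂ) (hn : 0 < s.card) :
    ∑ e ∈ s, Complex.normSq ((2 / (s.card : ℂ)) * (∑ e' ∈ s, a e') - a e)
      = ∑ e ∈ s, Complex.normSq (a e) := by
  have hn' : ((s.card : ℝ)) ≠ 0 := by positivity
  set n : ℕ := s.card with hns
  set S : ℂ := ∑ e' ∈ s, a e' with hS
  set T : ℂ := (2 / (n : ℂ)) * S with hT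
  have h1 : ∀ e ∈ s, Complex.normSq (T - a e)
      = Complex.normSq T + Complex.normSq (a e) - 2 * (T * (starRingEnd ℂ) (a e)).re :=
    fun e _ => Complex.normSq_sub _ _
  rw [Finset.sum_congr rfl h1]
  rw [Finset.sum_sub_distrib, Finset.sum_add_distrib, Finset.sum_const]
  have h2 : ∑ e ∈ s, 2 * (T * (starRingEnd ℂ) (a e)).re = 2 * (T * (starRingEnd ℂ) S).re := by
    rw [← Finset.mul_sum, ← Complex.re_sum, ← Finset.mul_sum, ← map_sum, ← hS]
  rw [h2]
  have h3 : T * (starRingEnd ℂ) S = (2 / (n : ℂ)) * (Complex.normSq S : ℂ) := by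
    rw [hT, mul_assoc, Complex.mul_conj]
  have h4 : ((2 : ℂ) / (n : ℂ)) = (((2 / (n : ℝ)) : ℝ) : ℂ) := by push_cast; ring
  have h5 : (T * (starRingEnd ℂ) S).re = (2 / (n : ℝ)) * Complex.normSq S := by
    rw [h3, h4, ← Complex.ofReal_mul]; simp
  have h6 : Complex.normSq T = (2 / (n : ℝ))^2 * Complex.normSq S := by
    rw [hT, Complex.normSq_mul, h4, Complex.normSq_ofReal]; ring
  rw [h5, h6, nsmul_eq_mul]
  field_simp
  ring

variable {V : Type*} [Fintype V] [DecidableEq V] (G : SimpleGraph V) [DecidableRel G.Adj]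

lemma sum_fiber' {A : Type*} [AddCommMonoid A] (v : V) (h : V → A) :
    ∑ e ∈ univ.filter (fun e : G.Dart => e.fst = v), h e.snd
      = ∑ u ∈ G.neighborFinset v, h u := by
  refine Finset.sum_bij (fun (e : G.Dart) _ => e.snd) ?_ ?_ ?_ ?_
  · intro e he
    simp only [mem_filter, mem_univ, true_and] at he
    simpa [mem_neighborFinset, ← he] using e.adj
  · intro e1 h1 e2 h2 hsnd
    simp only [mem_filter, mem_univ, true_and] at h1 h2
    exact SimpleGraph.Dart.ext _ _ (Prod.ext (h1.trans h2.symm) hsnd)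
  · intro u hu
    exact ⟨⟨(v, u), by simpa [mem_neighborFinset] using hu⟩, by simp, rfl⟩
  · intro e _; rfl

lemma shift_normSq (ψ : G.Dart → ℂ) :
    ∑ e, Complex.normSq (GraphWalk.shift G ψ e) = ∑ e, Complex.normSq (ψ e) :=
  Fintype.sum_bijective _ (SimpleGraph.Dart.symm_involutive.bijective) _ _ (fun _ => rfl)

lemma query_normSq (M : Finset V) (ψ : G.Dart → ℂ) :
    ∑ e, Complex.normSq (GraphWalk.query G M ψ e) = ∑ e, Complex.normSq (ψ e) := by
  refine Finset.sum_congr rfl fun e _ => ?_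
  unfold GraphWalk.query
  split <;> simp

lemma coin_normSq (hdeg : ∀ v : V, 0 < G.degree v) (ψ : G.Dart → ℂ) :
    ∑ e, Complex.normSq (GraphWalk.coin G ψ e) = ∑ e, Complex.normSq (ψ e) := by
  have key : ∀ f : G.Dart → ℝ, ∑ e, f e
      = ∑ v, ∑ e ∈ univ.filter (fun e : G.Dart => e.fst = v), f e :=
    fun f => (Finset.sum_fiberwise_of_maps_to (fun e _ => mem_univ e.fst) f).symm
  rw [key, key fun e => Complex.normSq (ψ e)]
  refine Finset.sum_congr rfl fun v _ => ?_
  have hc : (univ.filter (fun e : G.Dart => e.fst = v)).card = G.degree v :=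
    G.dart_fst_fiber_card_eq_degree v
  have hval : ∀ e ∈ univ.filter (fun e : G.Dart => e.fst = v),
      GraphWalk.coin G ψ e
        = (2 / (((univ.filter (fun e : G.Dart => e.fst = v)).card : ℕ) : ℂ)) *
            (∑ e' ∈ univ.filter (fun e' : G.Dart => e'.fst = v), ψ e') - ψ e := by
    intro e he
    simp only [mem_filter, mem_univ, true_and] at he
    unfold GraphWalk.coin
    rw [he, hc]
  rw [Finset.sum_congr rfl (fun e he => by rw [hval e he])]
  exact grover_fiber _ _ (by rw [hc]; exact hdeg v)

lemma step_normSq (hdeg : ∀ v : V, 0 < G.degree v) (M : Finset V) (ψ : G.Dart → ℂ) :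
    ∑ e, Complex.normSq (GraphWalk.step G M ψ e) = ∑ e, Complex.normSq (ψ e) := by
  unfold GraphWalk.step
  rw [shift_normSq, coin_normSq G hdeg, query_normSq]

lemma coin_add (f g : G.Dart → ℂ) :
    GraphWalk.coin G (fun e => f e + g e)
      = fun e => GraphWalk.coin G f e + GraphWalk.coin G g e := by
  funext e
  unfold GraphWalk.coin
  rw [Finset.sum_add_distrib]
  ring

lemma query_add (M : Finset V) (f g : G.Dart → ℂ) :
    GraphWalk.query G M (fun e => f e + g e)
      = fun e => GraphWalk.query G M f e + GraphWalk.query G M g e := by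
  funext e
  unfold GraphWalk.query
  split <;> ring

lemma step_add (M : Finset V) (f g : G.Dart → ℂ) :
    GraphWalk.step G M (fun e => f e + g e)
      = fun e => GraphWalk.step G M f e + GraphWalk.step G M g e := by
  unfold GraphWalk.step
  rw [query_add, coin_add]
  rfl

noncomputable def phi (i j : V) (c : ℝ) : G.Dart → ℂ := fun e =>
  if e.fst ∈ ({i, j} : Finset V) ∧ e.snd ∈ ({i, j} : Finset V)
  then ((-((G.degree i : ℝ) - 1) * c : ℝ) : ℂ) else ((c : ℝ) : ℂ)

lemma coin_query_phi (i j : V) (c : ℝ) (hadj : G.Adj i j) (hd : G.degree i = G.degree j)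
    (hdeg : ∀ v : V, 0 < G.degree v) :
    GraphWalk.coin G (GraphWalk.query G {i, j} (phi G i j c)) = phi G i j c := by
  classical
  have hij : i ≠ j := hadj.ne
  have hd1 : 1 ≤ G.degree i := (hdeg i)
  funext e
  unfold GraphWalk.coin GraphWalk.query
  by_cases hm : e.fst ∈ ({i, j} : Finset V)
  · obtain ⟨w, hw, hvw, hdv, hwv⟩ :
        ∃ w, w ∈ G.neighborFinset e.fst ∧ e.fst ≠ w ∧ G.degree e.fst = G.degree i ∧
          w ∈ ({i, j} : Finset V) ∧ ∀ u ∈ G.neighborFinset e.fst, u ∈ ({i, j} : Finset V) → u = w := by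
      rcases Finset.mem_insert.mp hm with h | h
      · refine ⟨j, ?_, ?_, ?_, ?_, ?_⟩
        · rw [h, mem_neighborFinset]; exact hadj
        · rw [h]; exact hij
        · rw [h]
        · simp
        · intro u hu humem
          rw [h, mem_neighborFinset] at hu
          rcases Finset.mem_insert.mp humem with h' | h'
          · exact absurd (h ▸ h' ▸ hu) (G.irrefl)
          · exact Finset.mem_singleton.mp h'
      · have h := Finset.mem_singleton.mp h
        refine ⟨i, ?_, ?_, ?_, ?_, ?_⟩
        · rw [h, mem_neighborFinset]; exact hadj.symm
        · rw [h]; exact hij.symm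
        · rw [h, hd]
        · simp
        · intro u hu humem
          rw [h, mem_neighborFinset] at hu
          rcases Finset.mem_insert.mp humem with h' | h'
          · exact h'
          · exact absurd (h ▸ (Finset.mem_singleton.mp h') ▸ hu) (G.irrefl)
    have hsum : ∑ e' ∈ univ.filter (fun e' : G.Dart => e'.fst = e.fst),
        (if e'.fst ∈ ({i, j} : Finset V) then -(phi G i j c e') else phi G i j c e') = 0 := by
      have hcongr : ∀ e' ∈ univ.filter (fun e' : G.Dart => e'.fst = e.fst),
          (if e'.fst ∈ ({i, j} : Finset V) then -(phi G i j c e') else phi G i j c e')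
          = -(if e'.snd ∈ ({i, j} : Finset V)
              then ((-((G.degree i : ℝ) - 1) * c : ℝ) : ℂ) else ((c : ℝ) : ℂ)) := by
        intro e' he'
        simp only [mem_filter, mem_univ, true_and] at he'
        simp [phi, he', hm]
      have hstep : ∑ e' ∈ univ.filter (fun e' : G.Dart => e'.fst = e.fst),
            -(if e'.snd ∈ ({i, j} : Finset V)
              then ((-((G.degree i : ℝ) - 1) * c : ℝ) : ℂ) else ((c : ℝ) : ℂ))
          = ∑ u ∈ G.neighborFinset e.fst,
            -(if u ∈ ({i, j} : Finset V)
              then ((-((G.degree i : ℝ) - 1) * c : ℝ) : ℂ) else ((c : ℝ) : ℂ)) :=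
        sum_fiber' G e.fst (fun u => -(if u ∈ ({i, j} : Finset V)
              then ((-((G.degree i : ℝ) - 1) * c : ℝ) : ℂ) else ((c : ℝ) : ℂ)))
      rw [Finset.sum_congr rfl hcongr, hstep, ← Finset.add_sum_erase _ _ hw]
      have h1 : ∀ u ∈ (G.neighborFinset e.fst).erase w,
          -(if u ∈ ({i, j} : Finset V)
              then ((-((G.degree i : ℝ) - 1) * c : ℝ) : ℂ) else ((c : ℝ) : ℂ)) = -((c : ℝ) : ℂ) := by
        intro u hu
        have h2 : u ∉ ({i, j} : Finset V) := fun hmem =>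
          (Finset.ne_of_mem_erase hu) (hwv.2 u (Finset.mem_of_mem_erase hu) hmem)
        simp [h2]
      rw [Finset.sum_congr rfl h1, Finset.sum_const, Finset.card_erase_of_mem hw,
        card_neighborFinset_eq_degree, hdv]
      simp only [hwv.1, if_pos, nsmul_eq_mul]
      push_cast [Nat.cast_sub hd1]
      ring
    rw [hsum]
    simp [hm]
  · have hsum : ∑ e' ∈ univ.filter (fun e' : G.Dart => e'.fst = e.fst),
        (if e'.fst ∈ ({i, j} : Finset V) then -(phi G i j c e') else phi G i j c e')
        = (G.degree e.fst : ℂ) * ((c : ℝ) : ℂ) := by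
      have hcongr : ∀ e' ∈ univ.filter (fun e' : G.Dart => e'.fst = e.fst),
          (if e'.fst ∈ ({i, j} : Finset V) then -(phi G i j c e') else phi G i j c e')
          = ((c : ℝ) : ℂ) := by
        intro e' he'
        simp only [mem_filter, mem_univ, true_and] at he'
        simp [phi, he', hm]
      rw [Finset.sum_congr rfl hcongr, Finset.sum_const, G.dart_fst_fiber_card_eq_degree e.fst,
        nsmul_eq_mul]
    rw [hsum]
    have hne : ((G.degree e.fst : ℕ) : ℂ) ≠ 0 := by
      exact_mod_cast Nat.cast_ne_zero.mpr (hdeg e.fst).ne'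
    have hphi : phi G i j c e = ((c : ℝ) : ℂ) := by simp [phi, hm]
    rw [hphi]
    simp only [hm, if_neg, not_false_iff]
    field_simp
    ring

lemma phi_symm (i j : V) (c : ℝ) (e : G.Dart) : phi G i j c e.symm = phi G i j c e := by
  unfold phi
  exact if_congr and_comm rfl rfl

lemma step_phi (i j : V) (c : ℝ) (hadj : G.Adj i j) (hd : G.degree i = G.degree j)
    (hdeg : ∀ v : V, 0 < G.degree v) :
    GraphWalk.step G {i, j} (phi G i j c) = phi G i j c := by
  funext e
  show GraphWalk.coin G (GraphWalk.query G {i, j} (phi G i j c)) e.symm = phi G i j c e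
  rw [coin_query_phi G i j c hadj hd hdeg]
  exact phi_symm G i j c e

lemma iterate_decomp (M : Finset V) (φ δ0 ψ0 : G.Dart → ℂ)
    (hφ : GraphWalk.step G M φ = φ) (hψ : ψ0 = fun e => φ e + δ0 e) :
    ∀ t : ℕ, (GraphWalk.step G M)^[t] ψ0
      = fun e => φ e + (GraphWalk.step G M)^[t] δ0 e := by
  intro t
  induction t with
  | zero => exact hψ
  | succ t ih =>
    rw [Function.iterate_succ_apply', ih, step_add G M φ _, hφ]
    conv_rhs => rw [Function.iterate_succ_apply']

lemma iterate_normSq (hdeg : ∀ v : V, 0 < G.degree v) (M : Finset V) (δ : G.Dart → ℂ) :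
    ∀ t : ℕ, ∑ e, Complex.normSq ((GraphWalk.step G M)^[t] δ e)
      = ∑ e, Complex.normSq (δ e) := by
  intro t
  induction t with
  | zero => rfl
  | succ t ih => rw [Function.iterate_succ_apply', step_normSq G hdeg, ih]

lemma fiber_sum_two {A : Type*} [AddCommMonoid A] (i j v w : V)
    (hw : w ∈ G.neighborFinset v)
    (huniq : ∀ u ∈ G.neighborFinset v, u ∈ ({i, j} : Finset V) → u = w)
    (hwm : w ∈ ({i, j} : Finset V)) (a b : A) :
    ∑ e' ∈ univ.filter (fun e' : G.Dart => e'.fst = v),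
        (if e'.snd ∈ ({i, j} : Finset V) then a else b)
      = a + (G.degree v - 1) • b := by
  have hstep : ∑ e' ∈ univ.filter (fun e' : G.Dart => e'.fst = v),
        (if e'.snd ∈ ({i, j} : Finset V) then a else b)
      = ∑ u ∈ G.neighborFinset v, (if u ∈ ({i, j} : Finset V) then a else b) :=
    sum_fiber' G v (fun u => if u ∈ ({i, j} : Finset V) then a else b)
  rw [hstep, ← Finset.add_sum_erase _ _ hw, if_pos hwm]
  congr 1
  have h1 : ∀ u ∈ (G.neighborFinset v).erase w,
      (if u ∈ ({i, j} : Finset V) then a else b) = b := by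
    intro u hu
    exact if_neg fun hmem =>
      (Finset.ne_of_mem_erase hu) (huniq u (Finset.mem_of_mem_erase hu) hmem)
  rw [Finset.sum_congr rfl h1, Finset.sum_const, Finset.card_erase_of_mem hw,
    card_neighborFinset_eq_degree]

lemma sum_normSq_add_le {D : Type*} (s : Finset D) (x y : D → ℂ) :
    ∑ e ∈ s, Complex.normSq (x e + y e)
      ≤ ∑ e ∈ s, Complex.normSq (x e) + ∑ e ∈ s, Complex.normSq (y e)
        + 2 * Real.sqrt ((∑ e ∈ s, Complex.normSq (x e)) * ∑ e ∈ s, Complex.normSq (y e)) := by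
  have h1 : ∑ e ∈ s, Complex.normSq (x e + y e)
      = ∑ e ∈ s, Complex.normSq (x e) + ∑ e ∈ s, Complex.normSq (y e)
        + 2 * ∑ e ∈ s, (x e * (starRingEnd ℂ) (y e)).re := by
    rw [Finset.mul_sum]
    rw [← Finset.sum_add_distrib, ← Finset.sum_add_distrib]
    exact Finset.sum_congr rfl fun e _ => Complex.normSq_add _ _
  rw [h1]
  have h2 : ∑ e ∈ s, (x e * (starRingEnd ℂ) (y e)).re
      ≤ Real.sqrt ((∑ e ∈ s, Complex.normSq (x e)) * ∑ e ∈ s, Complex.normSq (y e)) := by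
    have h3 : ∑ e ∈ s, (x e * (starRingEnd ℂ) (y e)).re
        ≤ ∑ e ∈ s, ‖x e‖ * ‖y e‖ := by
      refine Finset.sum_le_sum fun e _ => ?_
      calc (x e * (starRingEnd ℂ) (y e)).re ≤ ‖x e * (starRingEnd ℂ) (y e)‖ :=
            Complex.re_le_norm _
        _ = ‖x e‖ * ‖y e‖ := by rw [norm_mul, Complex.norm_conj]
    refine h3.trans ?_
    rw [Real.le_sqrt (Finset.sum_nonneg fun e _ => mul_nonneg (norm_nonneg _)
      (norm_nonneg _)) (mul_nonneg
        (Finset.sum_nonneg fun e _ => Complex.normSq_nonneg _)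
        (Finset.sum_nonneg fun e _ => Complex.normSq_nonneg _))]
    calc (∑ e ∈ s, ‖x e‖ * ‖y e‖) ^ 2
        ≤ (∑ e ∈ s, ‖x e‖ ^ 2) * ∑ e ∈ s, ‖y e‖ ^ 2 :=
          Finset.sum_mul_sq_le_sq_mul_sq s _ _
      _ = (∑ e ∈ s, Complex.normSq (x e)) * ∑ e ∈ s, Complex.normSq (y e) := by
          simp [Complex.sq_norm]
  linarith

end GraphWalkAux

set_option maxHeartbeats 1600000 in
/-- Let `i` and `j` be adjacent marked vertices of equal degree `d` in a finite simple
graph with `m` edges in which every vertex has positive degree. Starting from the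
uniform state `ψ₀(e) = 1/√(2m)`, the probability of finding a marked vertex after any
number of steps of the search algorithm is at most
`(1/m)·(2√((d−1)d³) + d(2d−1))`; in particular it is `O(d²/m)`. -/
theorem two_adjacent_marked_prob_bound {V : Type*} [Fintype V] [DecidableEq V]
    (G : SimpleGraph V) [DecidableRel G.Adj] (hdeg : ∀ v : V, 0 < G.degree v)
    (i j : V) (hadj : G.Adj i j) (hd : G.degree i = G.degree j) :
    ∀ t : ℕ,
      ∑ e ∈ Finset.univ.filter (fun e : G.Dart => e.fst ∈ ({i, j} : Finset V)),
        ‖(GraphWalk.step G {i, j})^[t]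
            (fun _ => ((1 / Real.sqrt (2 * G.edgeFinset.card) : ℝ) : ℂ)) e‖ ^ 2
      ≤ (1 / (G.edgeFinset.card : ℝ)) *
          (2 * Real.sqrt (((G.degree i : ℝ) - 1) * (G.degree i : ℝ) ^ 3) +
            (G.degree i : ℝ) * (2 * (G.degree i : ℝ) - 1)) := by
  classical
  intro t
  have hij : i ≠ j := hadj.ne
  have hmpos : 0 < G.edgeFinset.card :=
    Finset.card_pos.mpr ⟨s(i, j), SimpleGraph.mem_edgeFinset.mpr hadj⟩
  set c : ℝ := 1 / Real.sqrt (2 * (G.edgeFinset.card : ℝ)) with hc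
  set mR : ℝ := (G.edgeFinset.card : ℝ) with hmRdef
  have hmR0 : 0 < mR := by rw [hmRdef]; exact_mod_cast hmpos
  have hc2 : c ^ 2 = 1 / (2 * mR) := by
    rw [hc, div_pow, one_pow, Real.sq_sqrt (by linarith)]
  have hd1 : 1 ≤ G.degree i := hdeg i
  set dR : ℝ := (G.degree i : ℝ) with hdRdef
  have hd1R : (1 : ℝ) ≤ dR := by rw [hdRdef]; exact_mod_cast hd1
  -- notation
  set φ : G.Dart → ℂ := GraphWalkAux.phi G i j c with hφdef
  set δ0 : G.Dart → ℂ := fun e => ((c : ℝ) : ℂ) - φ e with hδ0def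
  -- decomposition
  have hdecomp := GraphWalkAux.iterate_decomp G {i, j} φ δ0 (fun _ => ((c : ℝ) : ℂ))
    (GraphWalkAux.step_phi G i j c hadj hd hdeg) (by funext e; simp [hδ0def]) t
  -- the special darts
  set D1 : G.Dart := ⟨(i, j), hadj⟩ with hD1def
  set D2 : G.Dart := ⟨(j, i), hadj.symm⟩ with hD2def
  have hcond : ∀ e : G.Dart,
      (e.fst ∈ ({i, j} : Finset V) ∧ e.snd ∈ ({i, j} : Finset V)) ↔ (e = D1 ∨ e = D2) := by
    intro e
    constructor
    · rintro ⟨h1, h2⟩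
      have hne : e.fst ≠ e.snd := G.ne_of_adj e.adj
      simp only [Finset.mem_insert, Finset.mem_singleton] at h1 h2
      rcases h1 with h1 | h1 <;> rcases h2 with h2 | h2
      · exact absurd (h1.trans h2.symm) hne
      · exact Or.inl (SimpleGraph.Dart.ext _ _ (Prod.ext h1 h2))
      · exact Or.inr (SimpleGraph.Dart.ext _ _ (Prod.ext h1 h2))
      · exact absurd (h1.trans h2.symm) hne
    · rintro (rfl | rfl) <;> simp [hD1def, hD2def]
  -- total normSq of δ0
  have hδ0sum : ∑ e : G.Dart, Complex.normSq (δ0 e) ≤ 2 * (dR * c) ^ 2 := by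
    have h1 : ∀ e : G.Dart, Complex.normSq (δ0 e)
        = if e = D1 ∨ e = D2 then (dR * c) ^ 2 else 0 := by
      intro e
      by_cases hcase : e.fst ∈ ({i, j} : Finset V) ∧ e.snd ∈ ({i, j} : Finset V)
      · rw [if_pos ((hcond e).mp hcase)]
        simp only [hδ0def, hφdef, GraphWalkAux.phi, if_pos hcase]
        rw [← Complex.ofReal_sub, Complex.normSq_ofReal]
        ring
      · rw [if_neg (fun h => hcase ((hcond e).mpr h))]
        simp only [hδ0def, hφdef, GraphWalkAux.phi, if_neg hcase]
        simp
    rw [Finset.sum_congr rfl fun e _ => h1 e]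
    have h2 : ∀ e : G.Dart, (if e = D1 ∨ e = D2 then (dR * c) ^ 2 else 0)
        = if e ∈ ({D1, D2} : Finset G.Dart) then (dR * c) ^ 2 else 0 := by
      intro e; simp [Finset.mem_insert]
    rw [Finset.sum_congr rfl fun e _ => h2 e, Finset.sum_ite_mem, Finset.univ_inter,
      Finset.sum_const, nsmul_eq_mul]
    have hcard : (({D1, D2} : Finset G.Dart).card : ℝ) ≤ 2 := by
      have := Finset.card_insert_le D1 ({D2} : Finset G.Dart)
      have h3 : ({D1, D2} : Finset G.Dart).card ≤ 2 := by simpa using this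
      exact_mod_cast h3
    have : (0:ℝ) ≤ (dR * c) ^ 2 := sq_nonneg _
    nlinarith
  -- marked sum of φ
  have hXuniq_i : ∀ u ∈ G.neighborFinset i, u ∈ ({i, j} : Finset V) → u = j := by
    intro u hu humem
    rw [SimpleGraph.mem_neighborFinset] at hu
    rcases Finset.mem_insert.mp humem with h' | h'
    · exact absurd (h' ▸ hu) (G.irrefl)
    · exact Finset.mem_singleton.mp h'
  have hXuniq_j : ∀ u ∈ G.neighborFinset j, u ∈ ({i, j} : Finset V) → u = i := by
    intro u hu humem
    rw [SimpleGraph.mem_neighborFinset] at hu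
    rcases Finset.mem_insert.mp humem with h' | h'
    · exact h'
    · exact absurd ((Finset.mem_singleton.mp h') ▸ hu) (G.irrefl)
  have hφfiber : ∀ v : V, v ∈ ({i, j} : Finset V) →
      ∑ e ∈ Finset.univ.filter (fun e : G.Dart => e.fst = v), Complex.normSq (φ e)
        = ((dR - 1) * c) ^ 2 + ((G.degree i - 1 : ℕ) : ℝ) * c ^ 2 := by
    intro v hv
    have hcongr : ∀ e ∈ Finset.univ.filter (fun e : G.Dart => e.fst = v),
        Complex.normSq (φ e)
          = (if e.snd ∈ ({i, j} : Finset V) then ((dR - 1) * c) ^ 2 else c ^ 2) := by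
      intro e he
      simp only [Finset.mem_filter, Finset.mem_univ, true_and] at he
      simp only [hφdef, GraphWalkAux.phi, he, hv, true_and]
      rw [hdRdef]
      by_cases h : e.snd ∈ ({i, j} : Finset V)
      · rw [if_pos h, if_pos h, Complex.normSq_ofReal]; ring
      · rw [if_neg h, if_neg h, Complex.normSq_ofReal]; ring
    rw [Finset.sum_congr rfl hcongr]
    rcases Finset.mem_insert.mp hv with h | h
    · subst h
      rw [GraphWalkAux.fiber_sum_two G v j v j (by rw [SimpleGraph.mem_neighborFinset]; exact hadj) hXuniq_i (by simp)]
      rw [nsmul_eq_mul]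
    · have h := Finset.mem_singleton.mp h
      subst h
      rw [GraphWalkAux.fiber_sum_two G i v v i (by rw [SimpleGraph.mem_neighborFinset]; exact hadj.symm) hXuniq_j (by simp)]
      rw [nsmul_eq_mul, ← hd]
  -- split marked set filter
  have hsplit : (Finset.univ.filter fun e : G.Dart => e.fst ∈ ({i, j} : Finset V))
      = (Finset.univ.filter fun e : G.Dart => e.fst = i)
        ∪ (Finset.univ.filter fun e : G.Dart => e.fst = j) := by
    ext e
    simp [Finset.mem_insert, Finset.mem_singleton]
  have hdisj : Disjoint (Finset.univ.filter fun e : G.Dart => e.fst = i)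
      (Finset.univ.filter fun e : G.Dart => e.fst = j) := by
    rw [Finset.disjoint_left]
    intro e he1 he2
    simp only [Finset.mem_filter] at he1 he2
    exact hij (he1.2 ▸ he2.2 ▸ rfl)
  have hX : ∑ e ∈ Finset.univ.filter (fun e : G.Dart => e.fst ∈ ({i, j} : Finset V)),
      Complex.normSq (φ e)
        = 2 * (((dR - 1) * c) ^ 2 + ((G.degree i - 1 : ℕ) : ℝ) * c ^ 2) := by
    rw [hsplit, Finset.sum_union hdisj, hφfiber i (by simp), hφfiber j (by simp)]
    ring
  -- final assembly
  set A : Finset G.Dart :=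
    Finset.univ.filter (fun e : G.Dart => e.fst ∈ ({i, j} : Finset V)) with hAdef
  set Δ : G.Dart → ℂ := (GraphWalk.step G {i, j})^[t] δ0 with hΔdef
  have hcast : ((G.degree i - 1 : ℕ) : ℝ) = dR - 1 := by
    rw [Nat.cast_sub hd1, hdRdef]; norm_num
  have hX2 : ∑ e ∈ A, Complex.normSq (φ e) = 2 * (dR * (dR - 1)) * c ^ 2 := by
    rw [hX, hcast]; ring
  have hY : ∑ e ∈ A, Complex.normSq (Δ e) ≤ 2 * (dR * c) ^ 2 := by
    refine le_trans (Finset.sum_le_sum_of_subset_of_nonneg (Finset.subset_univ A)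
      (fun e _ _ => Complex.normSq_nonneg _)) ?_
    rw [hΔdef, GraphWalkAux.iterate_normSq G hdeg {i, j} δ0 t]
    exact hδ0sum
  have hYnn : (0 : ℝ) ≤ ∑ e ∈ A, Complex.normSq (Δ e) :=
    Finset.sum_nonneg fun e _ => Complex.normSq_nonneg _
  have hXvnn : (0 : ℝ) ≤ 2 * (dR * (dR - 1)) * c ^ 2 := by
    have h0 : (0 : ℝ) ≤ dR * (dR - 1) := mul_nonneg (by linarith) (by linarith)
    exact mul_nonneg (by linarith) (sq_nonneg c)
  have hT : (0 : ℝ) ≤ (dR - 1) * dR ^ 3 := by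
    exact mul_nonneg (by linarith) (by positivity)
  have h6 : (2:ℝ) * (1/(2*mR)) = 1/mR := by field_simp
  have h1 : (∑ e ∈ A, Complex.normSq (φ e)) * ∑ e ∈ A, Complex.normSq (Δ e)
      ≤ ((dR - 1) * dR ^ 3) * (1 / mR) ^ 2 := by
    rw [hX2]
    calc 2 * (dR * (dR - 1)) * c ^ 2 * ∑ e ∈ A, Complex.normSq (Δ e)
        ≤ 2 * (dR * (dR - 1)) * c ^ 2 * (2 * (dR * c) ^ 2) :=
          mul_le_mul_of_nonneg_left hY hXvnn
      _ = ((dR - 1) * dR ^ 3) * (2 * c ^ 2) ^ 2 := by ring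
      _ = ((dR - 1) * dR ^ 3) * (1 / mR) ^ 2 := by
          rw [hc2]; congr 1; rw [h6]
  have h2 : Real.sqrt ((∑ e ∈ A, Complex.normSq (φ e)) * ∑ e ∈ A, Complex.normSq (Δ e))
      ≤ Real.sqrt ((dR - 1) * dR ^ 3) * (1 / mR) := by
    refine (Real.sqrt_le_sqrt h1).trans ?_
    rw [Real.sqrt_mul hT, Real.sqrt_sq (le_of_lt (div_pos one_pos hmR0))]
  have h4 : 2 * (dR * (dR - 1)) * c ^ 2 + 2 * (dR * c) ^ 2 = dR * (2 * dR - 1) * (1 / mR) := by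
    have h5 : 2 * (dR * (dR - 1)) * c ^ 2 + 2 * (dR * c) ^ 2
        = (2 * dR * dR - dR) * (2 * c ^ 2) := by ring
    rw [h5, hc2, h6]
    ring
  calc ∑ e ∈ A, ‖(GraphWalk.step G {i, j})^[t] (fun _ => ((c : ℝ) : ℂ)) e‖ ^ 2
      = ∑ e ∈ A, Complex.normSq ((GraphWalk.step G {i, j})^[t] (fun _ => ((c : ℝ) : ℂ)) e) :=
        Finset.sum_congr rfl fun e _ => Complex.sq_norm _
    _ = ∑ e ∈ A, Complex.normSq (φ e + Δ e) := by rw [hdecomp]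
    _ ≤ ∑ e ∈ A, Complex.normSq (φ e) + ∑ e ∈ A, Complex.normSq (Δ e)
          + 2 * Real.sqrt ((∑ e ∈ A, Complex.normSq (φ e)) * ∑ e ∈ A, Complex.normSq (Δ e)) :=
        GraphWalkAux.sum_normSq_add_le A φ Δ
    _ ≤ 2 * (dR * (dR - 1)) * c ^ 2 + 2 * (dR * c) ^ 2
          + 2 * (Real.sqrt ((dR - 1) * dR ^ 3) * (1 / mR)) := by
        have := add_le_add (add_le_add (le_of_eq hX2) hY) (by linarith [h2] :
          2 * Real.sqrt ((∑ e ∈ A, Complex.normSq (φ e)) * ∑ e ∈ A, Complex.normSq (Δ e))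
            ≤ 2 * (Real.sqrt ((dR - 1) * dR ^ 3) * (1 / mR)))
        linarith [this]
    _ = (1 / mR) * (2 * Real.sqrt ((dR - 1) * dR ^ 3) + dR * (2 * dR - 1)) := by
        linear_combination h4
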